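/- In a rigid abelian symmetric monoidal category A, every subobject U of the unit object 1 satisfies U ⊗ U ≅ U (via the canonical map). -/

import Mathlib

open CategoryTheory CategoryTheory.Limits CategoryTheory.MonoidalCategory

/-- In a rigid abelian symmetric monoidal category, every subobject `U` of the unit
satisfies `U ⊗ U ≅ U` via the canonical map `U ⊗ U ⟶ U ⊗ 𝟙 ≅ U`. -/
theorem subobject_unit_tensor_self
    {A : Type*} [Category A] [Abelian A]
    [MonoidalCategory A] [SymmetricCategory A] [MonoidalPreadditive A]
    [RigidCategory A] (U : Subobject (𝟙_ A)) :
    IsIso ((U : A) ◁ U.arrow ≫ (ρ_ (U : A)).hom) := by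
  set u := U.arrow with hu
  -- `tensorLeft U` is a right adjoint, hence preserves monomorphisms
  letI : (tensorLeft (U : A)).PreservesMonomorphisms :=
    Functor.preservesMonomorphisms_of_adjunction
      (tensorLeftAdjunction (U : A) ((U : A)ᘁ))
  -- `tensorLeft U` is a left adjoint, hence preserves colimits and epimorphisms
  letI : PreservesColimitsOfSize.{0, 0} (tensorLeft (U : A)) :=
    (tensorLeftAdjunction (ᘁ(U : A)) (U : A)).leftAdjoint_preservesColimits
  letI : (tensorLeft (U : A)).PreservesEpimorphisms :=
    Functor.preservesEpimorphisms_of_adjunction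
      (tensorLeftAdjunction (ᘁ(U : A)) (U : A))
  -- `tensorRight Q` is a right adjoint, hence preserves monomorphisms
  letI : (tensorRight (cokernel u)).PreservesMonomorphisms :=
    Functor.preservesMonomorphisms_of_adjunction
      (tensorRightAdjunction (ᘁ(cokernel u)) (cokernel u))
  have hmono : Mono ((U : A) ◁ u) := by
    simpa using (tensorLeft (U : A)).map_mono u
  -- `U ⊗ cokernel u` is zero
  have hmonoQ : Mono (u ▷ cokernel u) := by
    simpa using (tensorRight (cokernel u)).map_mono u
  have heq : Epi ((U : A) ◁ cokernel.π u) := by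
    simpa using (tensorLeft (U : A)).map_epi (cokernel.π u)
  have hz : u ▷ cokernel u = 0 := by
    rw [← cancel_epi ((U : A) ◁ cokernel.π u), comp_zero, whisker_exchange]
    simp [← unitors_inv_equal, cokernel.condition]
  have hQ : IsZero ((U : A) ⊗ cokernel u) := IsZero.of_mono_eq_zero _ hz
  -- hence the cokernel of `U ◁ u` is zero
  have hcz : IsZero (cokernel ((U : A) ◁ u)) := by
    have e : (tensorLeft (U : A)).obj (cokernel u) ≅ cokernel ((tensorLeft (U : A)).map u) :=
      PreservesCokernel.iso (tensorLeft (U : A)) u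
    have : IsZero (cokernel ((tensorLeft (U : A)).map u)) := hQ.of_iso e.symm
    simpa using this
  have hepi : Epi ((U : A) ◁ u) :=
    Abelian.epi_of_cokernel_π_eq_zero _ (hcz.eq_of_tgt _ _)
  haveI : IsIso ((U : A) ◁ u) := isIso_of_mono_of_epi _
  infer_instance
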